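/- Let C be a locally presentable category with a cofibrantly generated weak factorization system (L, R) such that ∅ → X lies in L for every object X, equipped with an exact cylinder I and a class An(I) of right I-anodyne extensions. Then: (1) a morphism in the class L is I-final if and only if it is a right I-anodyne extension; (2) a right I-fibration is I-final if and only if it lies in the class R. -/

import Mathlib

set_option linter.unusedSectionVars false

open CategoryTheory CategoryTheory.Limits

universe v u

namespace Paper

variable {C : Type u} [Category.{v} C]

/-- The class of morphisms having the left lifting property against every morphism in `T`. -/
def llp (T : MorphismProperty C) : MorphismProperty C :=
  fun _ _ f => ∀ ⦃X Y : C⦄ (g : X ⟶ Y), T g → HasLiftingProperty f g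

/-- The class of morphisms having the right lifting property against every morphism in `T`. -/
def rlp (T : MorphismProperty C) : MorphismProperty C :=
  fun _ _ g => ∀ ⦃A B : C⦄ (f : A ⟶ B), T f → HasLiftingProperty f g

/-- The morphism property associated to a set of arrows. -/
def ofArrows (S : Set (Arrow C)) : MorphismProperty C :=
  fun _ _ f => Arrow.mk f ∈ S

/-- A (possibly large) category `J` is `κ`-filtered if every diagram in `J` indexed by a
small category of size `< κ` admits a cocone. -/
def IsCardinalFiltered (J : Cat.{v, v}) (κ : Cardinal.{v}) : Prop :=
  ∀ K : Cat.{v, v}, Cardinal.mk (Arrow K) < κ → ∀ F : K ⥤ J, Nonempty (Cocone F)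

/-- An object `X` is `κ`-presentable if `Hom(X, -)` preserves colimits of `κ`-filtered
diagrams. -/
def IsPresentableObj (κ : Cardinal.{v}) (X : C) : Prop :=
  ∀ J : Cat.{v, v}, IsCardinalFiltered J κ →
    PreservesColimitsOfShape J (coyoneda.obj (Opposite.op X))

/-- A category is locally presentable if it is cocomplete and there is a regular cardinal `κ`
and a small family of `κ`-presentable objects such that every object is a `κ`-filtered colimit
of objects of the family. -/
class LocallyPresentable (C : Type u) [Category.{v} C] extends HasColimits C : Prop where
  exists_presentable_generator :
    ∃ κ : Cardinal.{v}, κ.IsRegular ∧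
      ∃ (ι : Type v) (G : ι → C), (∀ i, IsPresentableObj κ (G i)) ∧
        ∀ X : C, ∃ (J : Cat.{v, v}) (F : J ⥤ C) (c : Cocone F),
          IsCardinalFiltered J κ ∧ Nonempty (IsColimit c) ∧
          (∀ j : J, ∃ i, Nonempty (F.obj j ≅ G i)) ∧ Nonempty (c.pt ≅ X)

/-- `(L, R)` is a cofibrantly generated weak factorization system such that every morphism
from the initial object is in `L`. -/
structure IsCofGenWFS [HasColimits C] (L R : MorphismProperty C) : Prop where
  exists_generating_set : ∃ S : Set (Arrow C), Small.{v} S ∧ L = llp (rlp (ofArrows S))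
  rlp_eq : R = rlp L
  factorization : ∀ ⦃X Y : C⦄ (f : X ⟶ Y),
    ∃ (Z : C) (i : X ⟶ Z) (p : Z ⟶ Y), L i ∧ R p ∧ i ≫ p = f
  initial_mem : ∀ X : C, L (initial.to X)

/-- A functorial cylinder on `C`. -/
structure Cylinder (C : Type u) [Category.{v} C] where
  I : C ⥤ C
  d0 : 𝟭 C ⟶ I
  d1 : 𝟭 C ⟶ I
  σ : I ⟶ 𝟭 C
  d0_σ : ∀ X : C, d0.app X ≫ σ.app X = 𝟙 X
  d1_σ : ∀ X : C, d1.app X ≫ σ.app X = 𝟙 X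

namespace Cylinder

variable (E : Cylinder C)

lemma d0_naturality' {K M : C} (f : K ⟶ M) :
    f ≫ E.d0.app M = E.d0.app K ≫ E.I.map f := by
  simpa using E.d0.naturality f

lemma d1_naturality' {K M : C} (f : K ⟶ M) :
    f ≫ E.d1.app M = E.d1.app K ≫ E.I.map f := by
  simpa using E.d1.naturality f

variable [HasColimits C]

/-- The canonical map `X ⊔ X ⟶ I(X)`. -/
noncomputable def ι (X : C) : X ⨿ X ⟶ E.I.obj X :=
  coprod.desc (E.d0.app X) (E.d1.app X)

lemma ι_naturality {K M : C} (f : K ⟶ M) :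
    coprod.map f f ≫ E.ι M = E.ι K ≫ E.I.map f := by
  have h0 := E.d0.naturality f
  have h1 := E.d1.naturality f
  simp only [Functor.id_map] at h0 h1
  apply coprod.hom_ext <;> simp [ι, h0, h1]

/-- The pushout-corner map `∂I ⊠ f : (M ⊔ M) ⊔_{K ⊔ K} I(K) ⟶ I(M)`. -/
noncomputable def boundaryBox {K M : C} (f : K ⟶ M) :
    pushout (coprod.map f f) (E.ι K) ⟶ E.I.obj M :=
  pushout.desc (E.ι M) (E.I.map f) (E.ι_naturality f)

/-- The pushout-corner map `∂0 ⊠ f : M ⊔_K I(K) ⟶ I(M)`. -/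
noncomputable def box0 {K M : C} (f : K ⟶ M) :
    pushout f (E.d0.app K) ⟶ E.I.obj M :=
  pushout.desc (E.d0.app M) (E.I.map f) (E.d0_naturality' f)

/-- The pushout-corner map `∂1 ⊠ f : M ⊔_K I(K) ⟶ I(M)`. -/
noncomputable def box1 {K M : C} (f : K ⟶ M) :
    pushout f (E.d1.app K) ⟶ E.I.obj M :=
  pushout.desc (E.d1.app M) (E.I.map f) (E.d1_naturality' f)

end Cylinder

/-- A cylinder is exact with respect to the class `L` if it preserves small colimits,
the maps `X ⊔ X ⟶ I(X)` are in `L`, and the pushout-corner maps of morphisms of `L` are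
again in `L`. -/
structure IsExactCylinder [HasColimits C] (E : Cylinder C) (L : MorphismProperty C) : Prop where
  preservesColimits : PreservesColimits E.I
  ι_mem : ∀ X : C, L (E.ι X)
  boundaryBox_mem : ∀ ⦃K M : C⦄ (f : K ⟶ M), L f → L (E.boundaryBox f)
  box0_mem : ∀ ⦃K M : C⦄ (f : K ⟶ M), L f → L (E.box0 f)
  box1_mem : ∀ ⦃K M : C⦄ (f : K ⟶ M), L f → L (E.box1 f)

/-- `An` is a class of right `I`-anodyne extensions. -/
structure IsRightAnodyneClass [HasColimits C] (E : Cylinder C) (L : MorphismProperty C)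
    (An : MorphismProperty C) : Prop where
  le : An ≤ L
  exists_generating_set : ∃ Λ : Set (Arrow C), Small.{v} Λ ∧ ofArrows Λ ≤ L ∧
    An = llp (rlp (ofArrows Λ))
  box1_mem : ∀ ⦃K M : C⦄ (f : K ⟶ M), L f → An (E.box1 f)
  boundaryBox_mem : ∀ ⦃K M : C⦄ (f : K ⟶ M), An f → An (E.boundaryBox f)

/-- `An` is a class of left `I`-anodyne extensions. -/
structure IsLeftAnodyneClass [HasColimits C] (E : Cylinder C) (L : MorphismProperty C)
    (An : MorphismProperty C) : Prop where
  le : An ≤ L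
  exists_generating_set : ∃ Λ : Set (Arrow C), Small.{v} Λ ∧ ofArrows Λ ≤ L ∧
    An = llp (rlp (ofArrows Λ))
  box0_mem : ∀ ⦃K M : C⦄ (f : K ⟶ M), L f → An (E.box0 f)
  boundaryBox_mem : ∀ ⦃K M : C⦄ (f : K ⟶ M), An f → An (E.boundaryBox f)

/-- A morphism is an `An`-fibration if it has the right lifting property against all
morphisms of `An`. -/
def IsFib (An : MorphismProperty C) {X Y : C} (p : X ⟶ Y) : Prop :=
  ∀ ⦃A B : C⦄ (f : A ⟶ B), An f → HasLiftingProperty f p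

/-- An object `W` is `An`-fibrant if the map `W ⟶ *` has the right lifting property against
all morphisms of `An`, i.e. every morphism to `W` extends along every morphism of `An`. -/
def IsFibrantObj (An : MorphismProperty C) (W : C) : Prop :=
  ∀ ⦃A B : C⦄ (f : A ⟶ B), An f → ∀ a : A ⟶ W, ∃ b : B ⟶ W, f ≫ b = a

namespace Cylinder

variable (E : Cylinder C)

/-- An `I`-homotopy from `f` to `g`. -/
def Homotopy {X Y : C} (f g : X ⟶ Y) : Prop :=
  ∃ h : E.I.obj X ⟶ Y, E.d0.app X ≫ h = f ∧ E.d1.app X ≫ h = g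

/-- `[X, Y]_I`, the quotient of `Hom(X, Y)` by the equivalence relation generated by
`I`-homotopy. -/
def HoHom (X Y : C) : Type v :=
  Quot (fun f g : X ⟶ Y => E.Homotopy f g)

/-- Precomposition `f^* : [B, W]_I ⟶ [A, W]_I`. -/
def precompQ {A B : C} (f : A ⟶ B) (W : C) : E.HoHom B W → E.HoHom A W :=
  Quot.lift (fun g => Quot.mk _ (f ≫ g)) (by
    rintro g g' ⟨h, h0, h1⟩
    apply Quot.sound
    refine ⟨E.I.map f ≫ h, ?_, ?_⟩
    · rw [← Category.assoc, ← E.d0_naturality' f, Category.assoc, h0]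
    · rw [← Category.assoc, ← E.d1_naturality' f, Category.assoc, h1])

end Cylinder

/-- `f` is a weak equivalence if it induces bijections `[B, W]_I ≅ [A, W]_I` for all
fibrant `W`. -/
def IsWeakEq (E : Cylinder C) (An : MorphismProperty C) {A B : C} (f : A ⟶ B) : Prop :=
  ∀ W : C, IsFibrantObj An W → Function.Bijective (E.precompQ f W)

/-- `f` is a retract of `f'`. -/
def IsRetractOf {X Y X' Y' : C} (f : X ⟶ Y) (f' : X' ⟶ Y') : Prop :=
  ∃ (i : X ⟶ X') (r : X' ⟶ X) (j : Y ⟶ Y') (s : Y' ⟶ Y),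
    i ≫ r = 𝟙 X ∧ j ≫ s = 𝟙 Y ∧ i ≫ f' = f ≫ j ∧ f' ≫ s = r ≫ f

/-- A model structure on a category: the classes of weak equivalences, cofibrations and
fibrations, subject to the two-out-of-three, retract, lifting and factorization axioms. -/
structure ModelStructure (C : Type u) [Category.{v} C] where
  weq : MorphismProperty C
  cof : MorphismProperty C
  fib : MorphismProperty C
  weq_id : ∀ X : C, weq (𝟙 X)
  weq_comp : ∀ ⦃X Y Z : C⦄ (f : X ⟶ Y) (g : Y ⟶ Z), weq f → weq g → weq (f ≫ g)
  weq_cancel_left : ∀ ⦃X Y Z : C⦄ (f : X ⟶ Y) (g : Y ⟶ Z), weq f → weq (f ≫ g) → weq g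
  weq_cancel_right : ∀ ⦃X Y Z : C⦄ (f : X ⟶ Y) (g : Y ⟶ Z), weq g → weq (f ≫ g) → weq f
  weq_retract : ∀ ⦃X Y X' Y' : C⦄ (f : X ⟶ Y) (f' : X' ⟶ Y'),
    IsRetractOf f f' → weq f' → weq f
  cof_retract : ∀ ⦃X Y X' Y' : C⦄ (f : X ⟶ Y) (f' : X' ⟶ Y'),
    IsRetractOf f f' → cof f' → cof f
  fib_retract : ∀ ⦃X Y X' Y' : C⦄ (f : X ⟶ Y) (f' : X' ⟶ Y'),
    IsRetractOf f f' → fib f' → fib f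
  lift_trivCof_fib : ∀ ⦃A B X Y : C⦄ (i : A ⟶ B) (p : X ⟶ Y),
    cof i → weq i → fib p → HasLiftingProperty i p
  lift_cof_trivFib : ∀ ⦃A B X Y : C⦄ (i : A ⟶ B) (p : X ⟶ Y),
    cof i → fib p → weq p → HasLiftingProperty i p
  fact_cof_trivFib : ∀ ⦃X Y : C⦄ (f : X ⟶ Y),
    ∃ (Z : C) (i : X ⟶ Z) (p : Z ⟶ Y), cof i ∧ fib p ∧ weq p ∧ i ≫ p = f
  fact_trivCof_fib : ∀ ⦃X Y : C⦄ (f : X ⟶ Y),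
    ∃ (Z : C) (i : X ⟶ Z) (p : Z ⟶ Y), cof i ∧ weq i ∧ fib p ∧ i ≫ p = f

/-- An object `W` is fibrant for a model structure if every morphism to `W` extends along
every trivial cofibration, i.e. `W ⟶ *` has the right lifting property against trivial
cofibrations. -/
def ModelStructure.Fibrant (M : ModelStructure C) (W : C) : Prop :=
  ∀ ⦃A B : C⦄ (i : A ⟶ B), M.cof i → M.weq i → ∀ a : A ⟶ W, ∃ b : B ⟶ W, i ≫ b = a


/-- Morphisms over `A` from `(X, u)` to `(W, q)`. -/
def OverHom {X W A : C} (u : X ⟶ A) (q : W ⟶ A) : Type v :=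
  { g : X ⟶ W // g ≫ q = u }

namespace Cylinder

variable (E : Cylinder C)

/-- An `I`-homotopy over `A`. -/
def OverHomotopy {X W A : C} (u : X ⟶ A) (q : W ⟶ A)
    (g g' : OverHom u q) : Prop :=
  ∃ h : E.I.obj X ⟶ W, E.d0.app X ≫ h = g.1 ∧ E.d1.app X ≫ h = g'.1 ∧
    h ≫ q = E.σ.app X ≫ u

/-- Homotopy classes of morphisms over `A`, `[(X, u), (W, q)]_{I_A}`. -/
def OverHoHom {X W A : C} (u : X ⟶ A) (q : W ⟶ A) : Type v :=
  Quot (E.OverHomotopy u q)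

/-- Precomposition `[(Y, p), (W, q)]_{I_A} ⟶ [(X, f ≫ p), (W, q)]_{I_A}`. -/
def overPrecompQ {X Y A W : C} (f : X ⟶ Y) (p : Y ⟶ A) (q : W ⟶ A) :
    E.OverHoHom p q → E.OverHoHom (f ≫ p) q :=
  Quot.lift (fun g => Quot.mk _ ⟨f ≫ g.1, by rw [Category.assoc, g.2]⟩)
    (by
      rintro g g' ⟨h, h0, h1, hq⟩
      apply Quot.sound
      refine ⟨E.I.map f ≫ h, ?_, ?_, ?_⟩
      · rw [← Category.assoc, ← E.d0_naturality' f, Category.assoc, h0]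
      · rw [← Category.assoc, ← E.d1_naturality' f, Category.assoc, h1]
      · have hnat := E.σ.naturality f
        simp only [Functor.id_map] at hnat
        simp only [Category.assoc, hq]
        rw [← Category.assoc, hnat, Category.assoc])

end Cylinder

/-- A morphism `f : X ⟶ Y` is `I`-final if for every object `A`, every `p : Y ⟶ A` and
every right `I`-fibration `q : W ⟶ A`, the induced map
`[(Y, p), (W, q)]_{I_A} ⟶ [(X, f ≫ p), (W, q)]_{I_A}` is bijective. -/
def IsFinal (E : Cylinder C) (An : MorphismProperty C) {X Y : C} (f : X ⟶ Y) : Prop :=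
  ∀ (A : C) (p : Y ⟶ A) ⦃W : C⦄ (q : W ⟶ A), IsFib An q →
    Function.Bijective (E.overPrecompQ f p q)


section AuxProofs

variable {L An : MorphismProperty C} {E : Cylinder C}
variable [HasColimits C]

lemma sigma_nat (E : Cylinder C) {X Y : C} (f : X ⟶ Y) :
    E.I.map f ≫ E.σ.app Y = E.σ.app X ≫ f := by
  simpa using E.σ.naturality f

lemma d0_nat_assoc (E : Cylinder C) {K M Z : C} (f : K ⟶ M) (t : E.I.obj M ⟶ Z) :
    f ≫ E.d0.app M ≫ t = E.d0.app K ≫ E.I.map f ≫ t := by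
  rw [← Category.assoc, E.d0_naturality', Category.assoc]

lemma d1_nat_assoc (E : Cylinder C) {K M Z : C} (f : K ⟶ M) (t : E.I.obj M ⟶ Z) :
    f ≫ E.d1.app M ≫ t = E.d1.app K ≫ E.I.map f ≫ t := by
  rw [← Category.assoc, E.d1_naturality', Category.assoc]

lemma sigma_nat_assoc (E : Cylinder C) {K M Z : C} (f : K ⟶ M) (t : M ⟶ Z) :
    E.I.map f ≫ E.σ.app M ≫ t = E.σ.app K ≫ f ≫ t := by
  rw [← Category.assoc, sigma_nat, Category.assoc]

lemma inl_ι (E : Cylinder C) (X : C) : coprod.inl ≫ E.ι X = E.d0.app X := by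
  simp [Cylinder.ι]; exact coprod.inl_desc _ _

lemma inr_ι (E : Cylinder C) (X : C) : coprod.inr ≫ E.ι X = E.d1.app X := by
  simp [Cylinder.ι]; exact coprod.inr_desc _ _

lemma inl_ι_assoc (E : Cylinder C) {X Z : C} (t : E.I.obj X ⟶ Z) :
    coprod.inl ≫ E.ι X ≫ t = E.d0.app X ≫ t := by
  rw [← Category.assoc]; simp [Cylinder.ι]; exact coprod.inl_desc _ _

lemma inr_ι_assoc (E : Cylinder C) {X Z : C} (t : E.I.obj X ⟶ Z) :
    coprod.inr ≫ E.ι X ≫ t = E.d1.app X ≫ t := by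
  rw [← Category.assoc]; simp [Cylinder.ι]; exact coprod.inr_desc _ _

lemma d0_σ_assoc (E : Cylinder C) {X Z : C} (t : X ⟶ Z) :
    E.d0.app X ≫ E.σ.app X ≫ t = t := by
  rw [← Category.assoc, E.d0_σ]; simp

lemma d1_σ_assoc (E : Cylinder C) {X Z : C} (t : X ⟶ Z) :
    E.d1.app X ≫ E.σ.app X ≫ t = t := by
  rw [← Category.assoc, E.d1_σ]; simp

lemma I_coprod_hom_ext (hpc : PreservesColimits E.I) {X Y Z : C}
    {a b : E.I.obj (X ⨿ Y) ⟶ Z}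
    (h1 : E.I.map coprod.inl ≫ a = E.I.map coprod.inl ≫ b)
    (h2 : E.I.map coprod.inr ≫ a = E.I.map coprod.inr ≫ b) : a = b := by
  haveI := hpc
  haveI : IsIso (coprodComparison E.I X Y) := inferInstance
  rw [← cancel_epi (coprodComparison E.I X Y)]
  apply coprod.hom_ext
  · simp only [← Category.assoc, coprodComparison_inl]
    simpa only [Category.assoc] using h1
  · simp only [← Category.assoc, coprodComparison_inr]
    simpa only [Category.assoc] using h2

lemma overHomotopy_refl (E : Cylinder C) {X W A : C} {u : X ⟶ A} {r : W ⟶ A}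
    (g : OverHom u r) : E.OverHomotopy u r g g :=
  ⟨E.σ.app X ≫ g.1,
   by rw [← Category.assoc, E.d0_σ]; simp,
   by rw [← Category.assoc, E.d1_σ]; simp,
   by rw [Category.assoc, g.2]⟩

/-- The key combinator: from homotopies `g1 ⇝ g0` and `g2 ⇝ g0` over `A` with values in a
fibration, construct a homotopy `g1 ⇝ g2`. -/
lemma overHomotopy_comb (hE : IsExactCylinder E L) (hAn : IsRightAnodyneClass E L An)
    {X W A : C} {u : X ⟶ A} {r : W ⟶ A} (hr : IsFib An r)
    {g0 g1 g2 : OverHom u r}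
    (hh : E.OverHomotopy u r g1 g0) (hk : E.OverHomotopy u r g2 g0) :
    E.OverHomotopy u r g1 g2 := by
  obtain ⟨h, h0, h1, hhr⟩ := hh
  obtain ⟨k, k0, k1, hkr⟩ := hk
  haveI := hE.preservesColimits
  haveI : IsIso (coprodComparison E.I X X) := inferInstance
  obtain ⟨TK, hTKl, hTKr⟩ : ∃ TK : E.I.obj (X ⨿ X) ⟶ W,
      E.I.map coprod.inl ≫ TK = h ∧ E.I.map coprod.inr ≫ TK = k :=
    ⟨inv (coprodComparison E.I X X) ≫ coprod.desc h k,
      by rw [← Category.assoc, map_inl_inv_coprodComparison, coprod.inl_desc],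
      by rw [← Category.assoc, map_inr_inv_coprodComparison, coprod.inr_desc]⟩
  have compat : E.ι X ≫ (E.σ.app X ≫ g0.1) = E.d1.app (X ⨿ X) ≫ TK := by
    apply coprod.hom_ext
    · rw [inl_ι_assoc, d0_σ_assoc, d1_nat_assoc, hTKl, h1]
    · rw [inr_ι_assoc, d1_σ_assoc, d1_nat_assoc, hTKr, k1]
  have hj : An (E.box1 (E.ι X)) := hAn.box1_mem (E.ι X) (hE.ι_mem X)
  haveI := hr _ hj
  have hTKrA : TK ≫ r = E.I.map (E.ι X) ≫ E.σ.app (E.I.obj X) ≫ E.σ.app X ≫ u := by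
    apply I_coprod_hom_ext hE.preservesColimits
    · rw [← Category.assoc, hTKl, hhr, ← E.I.map_comp_assoc, inl_ι,
        sigma_nat_assoc, d0_σ_assoc]
    · rw [← Category.assoc, hTKr, hkr, ← E.I.map_comp_assoc, inr_ι,
        sigma_nat_assoc, d1_σ_assoc]
  have sq : CommSq (pushout.desc (E.σ.app X ≫ g0.1) TK compat) (E.box1 (E.ι X)) r
      (E.σ.app (E.I.obj X) ≫ E.σ.app X ≫ u) := by
    constructor
    apply pushout.hom_ext
    · rw [← Category.assoc, pushout.inl_desc, ← Category.assoc,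
        show pushout.inl (E.ι X) (E.d1.app (X ⨿ X)) ≫ E.box1 (E.ι X) =
          E.d1.app (E.I.obj X) from pushout.inl_desc _ _ _,
        d1_σ_assoc, Category.assoc, g0.2]
    · rw [← Category.assoc, pushout.inr_desc, ← Category.assoc,
        show pushout.inr (E.ι X) (E.d1.app (X ⨿ X)) ≫ E.box1 (E.ι X) =
          E.I.map (E.ι X) from pushout.inr_desc _ _ _,
        hTKrA]
  have hlift1 : E.I.map (E.ι X) ≫ sq.lift = TK := by
    rw [show E.I.map (E.ι X) = pushout.inr (E.ι X) (E.d1.app (X ⨿ X)) ≫ E.box1 (E.ι X)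
        from (pushout.inr_desc _ _ _).symm, Category.assoc, sq.fac_left, pushout.inr_desc]
  have hmap0 : E.I.map (E.d0.app X) ≫ sq.lift = h := by
    rw [show E.d0.app X = coprod.inl ≫ E.ι X by simp [Cylinder.ι]; exact (coprod.inl_desc _ _).symm, E.I.map_comp,
      Category.assoc, hlift1, hTKl]
  have hmap1 : E.I.map (E.d1.app X) ≫ sq.lift = k := by
    rw [show E.d1.app X = coprod.inr ≫ E.ι X by simp [Cylinder.ι]; exact (coprod.inr_desc _ _).symm, E.I.map_comp,
      Category.assoc, hlift1, hTKr]
  refine ⟨E.d0.app (E.I.obj X) ≫ sq.lift, ?_, ?_, ?_⟩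
  · rw [d0_nat_assoc, hmap0]; simpa using h0
  · rw [d0_nat_assoc, hmap1]; simpa using k0
  · rw [Category.assoc, sq.fac_right, d0_σ_assoc]

lemma overHomotopy_equivalence (hE : IsExactCylinder E L)
    (hAn : IsRightAnodyneClass E L An)
    {X W A : C} {u : X ⟶ A} {r : W ⟶ A} (hr : IsFib An r) :
    Equivalence (E.OverHomotopy u r) where
  refl g := overHomotopy_refl E g
  symm hab := overHomotopy_comb hE hAn hr (overHomotopy_refl E _) hab
  trans hab hbc := overHomotopy_comb hE hAn hr hab
    (overHomotopy_comb hE hAn hr (overHomotopy_refl E _) hbc)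

lemma quot_mk_eq_iff (hE : IsExactCylinder E L) (hAn : IsRightAnodyneClass E L An)
    {X W A : C} {u : X ⟶ A} {r : W ⟶ A} (hr : IsFib An r) {g g' : OverHom u r} :
    Quot.mk (E.OverHomotopy u r) g = Quot.mk (E.OverHomotopy u r) g' ↔
      E.OverHomotopy u r g g' :=
  Iff.trans Quot.eq (overHomotopy_equivalence hE hAn hr).eqvGen_iff

/-- Strictification: a lift up to fibrewise homotopy along a morphism of `L` can be corrected
to a genuine lift, using the right anodyne extension `∂1 ⊠ i`. -/
lemma strict_lift (hE : IsExactCylinder E L) (hAn : IsRightAnodyneClass E L An)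
    {K M W B : C} {i : K ⟶ M} (hi : L i) {g : W ⟶ B} (hg : IsFib An g)
    {a : K ⟶ W} {b : M ⟶ B} {c : M ⟶ W} (hc : c ≫ g = b)
    {h : E.I.obj K ⟶ W} (h0 : E.d0.app K ≫ h = a) (h1 : E.d1.app K ≫ h = i ≫ c)
    (hh : h ≫ g = E.σ.app K ≫ i ≫ b) :
    ∃ ℓ : M ⟶ W, i ≫ ℓ = a ∧ ℓ ≫ g = b := by
  haveI := hg _ (hAn.box1_mem i hi)
  have compat : i ≫ c = E.d1.app K ≫ h := h1.symm
  have sq : CommSq (pushout.desc c h compat) (E.box1 i) g (E.σ.app M ≫ b) := by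
    constructor
    apply pushout.hom_ext
    · rw [← Category.assoc, pushout.inl_desc, ← Category.assoc,
        show pushout.inl i (E.d1.app K) ≫ E.box1 i = E.d1.app M from pushout.inl_desc _ _ _,
        d1_σ_assoc, hc]
    · rw [← Category.assoc, pushout.inr_desc, ← Category.assoc,
        show pushout.inr i (E.d1.app K) ≫ E.box1 i = E.I.map i from pushout.inr_desc _ _ _,
        sigma_nat_assoc, hh]
  have hlift1 : E.I.map i ≫ sq.lift = h := by
    rw [show E.I.map i = pushout.inr i (E.d1.app K) ≫ E.box1 i
        from (pushout.inr_desc _ _ _).symm, Category.assoc, sq.fac_left, pushout.inr_desc]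
  refine ⟨E.d0.app M ≫ sq.lift, ?_, ?_⟩
  · rw [d0_nat_assoc, hlift1, h0]
  · rw [Category.assoc, sq.fac_right, d0_σ_assoc]

end AuxProofs

/-- Lemma 3.6 (finalfibrations): a morphism of `L` is `I`-final iff it is right `I`-anodyne;
a right `I`-fibration is `I`-final iff it is in `R`. -/
theorem statement_12    {C : Type u} [Category.{v} C] [LocallyPresentable C]
    (L R : MorphismProperty C) (hW : IsCofGenWFS L R)
    (E : Cylinder C) (hE : IsExactCylinder E L)
    (An : MorphismProperty C) (hAn : IsRightAnodyneClass E L An) :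
    (∀ ⦃X Y : C⦄ (f : X ⟶ Y), L f → (IsFinal E An f ↔ An f)) ∧
    (∀ ⦃X Y : C⦄ (p : X ⟶ Y), IsFib An p → (IsFinal E An p ↔ R p)) := by
  obtain ⟨Λ, -, -, hΛ⟩ := hAn.exists_generating_set
  constructor
  · intro X Y f hf
    constructor
    · -- final + L ⟹ anodyne
      intro hfin
      rw [hΛ]
      intro W B g hg
      have hgfib : IsFib An g := by
        intro A' B' f' hf'
        rw [hΛ] at hf'
        exact hf' g hg
      constructor
      intro t b sq
      obtain ⟨y, hy⟩ := (hfin B b g hgfib).2 (Quot.mk _ ⟨t, sq.w⟩)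
      obtain ⟨g0, rfl⟩ := Quot.exists_rep y
      have hy' : Quot.mk (E.OverHomotopy (f ≫ b) g)
          ⟨f ≫ g0.1, by rw [Category.assoc, g0.2]⟩ = Quot.mk _ ⟨t, sq.w⟩ := hy
      obtain ⟨h, h0, h1, hh⟩ := (overHomotopy_equivalence hE hAn hgfib).symm
        ((quot_mk_eq_iff hE hAn hgfib).1 hy')
      have h0' : E.d0.app X ≫ h = t := h0
      have h1' : E.d1.app X ≫ h = f ≫ g0.1 := h1
      have hh' : h ≫ g = E.σ.app X ≫ f ≫ b := hh
      obtain ⟨ℓ, hl1, hl2⟩ := strict_lift hE hAn hf hgfib g0.2 h0' h1' hh'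
      exact ⟨⟨⟨ℓ, hl1, hl2⟩⟩⟩
    · -- anodyne ⟹ final
      intro hfA A p W q hq
      constructor
      · intro x y hxy
        obtain ⟨g1', rfl⟩ := Quot.exists_rep x
        obtain ⟨g2', rfl⟩ := Quot.exists_rep y
        have hxy' : Quot.mk (E.OverHomotopy (f ≫ p) q)
            ⟨f ≫ g1'.1, by rw [Category.assoc, g1'.2]⟩ =
            Quot.mk _ ⟨f ≫ g2'.1, by rw [Category.assoc, g2'.2]⟩ := hxy
        obtain ⟨h, h0, h1, hh⟩ := (quot_mk_eq_iff hE hAn hq).1 hxy'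
        have h0' : E.d0.app X ≫ h = f ≫ g1'.1 := h0
        have h1' : E.d1.app X ≫ h = f ≫ g2'.1 := h1
        have hh' : h ≫ q = E.σ.app X ≫ f ≫ p := hh
        haveI := hq _ (hAn.boundaryBox_mem f hfA)
        have compat : coprod.map f f ≫ coprod.desc g1'.1 g2'.1 = E.ι X ≫ h := by
          apply coprod.hom_ext
          · rw [← Category.assoc, coprod.inl_map, Category.assoc, coprod.inl_desc,
              inl_ι_assoc, h0']
          · rw [← Category.assoc, coprod.inr_map, Category.assoc, coprod.inr_desc,
              inr_ι_assoc, h1']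
        have sq2 : CommSq (pushout.desc (coprod.desc g1'.1 g2'.1) h compat)
            (E.boundaryBox f) q (E.σ.app Y ≫ p) := by
          constructor
          apply pushout.hom_ext
          · rw [← Category.assoc, pushout.inl_desc, ← Category.assoc,
              show pushout.inl (coprod.map f f) (E.ι X) ≫ E.boundaryBox f = E.ι Y
                from pushout.inl_desc _ _ _]
            apply coprod.hom_ext
            · rw [← Category.assoc, coprod.inl_desc, inl_ι_assoc, d0_σ_assoc, g1'.2]
            · rw [← Category.assoc, coprod.inr_desc, inr_ι_assoc, d1_σ_assoc, g2'.2]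
          · rw [← Category.assoc, pushout.inr_desc, ← Category.assoc,
              show pushout.inr (coprod.map f f) (E.ι X) ≫ E.boundaryBox f = E.I.map f
                from pushout.inr_desc _ _ _,
              sigma_nat_assoc, hh']
        have hι : E.ι Y ≫ sq2.lift = coprod.desc g1'.1 g2'.1 := by
          rw [show E.ι Y = pushout.inl (coprod.map f f) (E.ι X) ≫ E.boundaryBox f
              from (pushout.inl_desc _ _ _).symm, Category.assoc, sq2.fac_left,
            pushout.inl_desc]
        apply Quot.sound
        refine ⟨sq2.lift, ?_, ?_, ?_⟩
        · rw [show E.d0.app Y = coprod.inl ≫ E.ι Y from (inl_ι E Y).symm,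
            Category.assoc, hι, coprod.inl_desc]
        · rw [show E.d1.app Y = coprod.inr ≫ E.ι Y from (inr_ι E Y).symm,
            Category.assoc, hι, coprod.inr_desc]
        · exact sq2.fac_right
      · intro x
        obtain ⟨a, rfl⟩ := Quot.exists_rep x
        haveI := hq f hfA
        have sq3 : CommSq a.1 f q p := ⟨a.2⟩
        exact ⟨Quot.mk _ ⟨sq3.lift, sq3.fac_right⟩,
          congrArg (Quot.mk _) (Subtype.ext sq3.fac_left)⟩
  · intro X Y q hq
    constructor
    · -- final fibration ⟹ R
      intro hfin
      rw [hW.rlp_eq]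
      intro K M i hi
      obtain ⟨y, hy⟩ := (hfin Y (𝟙 Y) q hq).2 (Quot.mk _ ⟨𝟙 X, by simp⟩)
      obtain ⟨s, rfl⟩ := Quot.exists_rep y
      have hy' : Quot.mk (E.OverHomotopy (q ≫ 𝟙 Y) q)
          ⟨q ≫ s.1, by rw [Category.assoc, s.2]⟩ = Quot.mk _ ⟨𝟙 X, by simp⟩ := hy
      obtain ⟨Kh, K0, K1, Kq⟩ := (overHomotopy_equivalence hE hAn hq).symm
        ((quot_mk_eq_iff hE hAn hq).1 hy')
      have K0' : E.d0.app X ≫ Kh = 𝟙 X := K0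
      have K1' : E.d1.app X ≫ Kh = q ≫ s.1 := K1
      have Kq' : Kh ≫ q = E.σ.app X ≫ q := by
        have := Kq; simpa using this
      constructor
      intro t b sq
      have hc : (b ≫ s.1) ≫ q = b := by
        rw [Category.assoc, s.2, Category.comp_id]
      have h0' : E.d0.app K ≫ E.I.map t ≫ Kh = t := by
        rw [← d0_nat_assoc, K0', Category.comp_id]
      have h1' : E.d1.app K ≫ E.I.map t ≫ Kh = i ≫ b ≫ s.1 := by
        rw [← d1_nat_assoc, K1', ← Category.assoc, sq.w, Category.assoc]
      have hh' : (E.I.map t ≫ Kh) ≫ q = E.σ.app K ≫ i ≫ b := by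
        rw [Category.assoc, Kq', sigma_nat_assoc, sq.w]
      obtain ⟨ℓ, hl1, hl2⟩ := strict_lift hE hAn hi hq hc h0' h1' hh'
      exact ⟨⟨⟨ℓ, hl1, hl2⟩⟩⟩
    · -- R fibration ⟹ final
      intro hR
      rw [hW.rlp_eq] at hR
      haveI h1 : HasLiftingProperty (initial.to Y) q := hR _ (hW.initial_mem Y)
      have sqs : CommSq (initial.to X) (initial.to Y) q (𝟙 Y) :=
        ⟨by apply initial.hom_ext⟩
      have ssec : sqs.lift ≫ q = 𝟙 Y := sqs.fac_right
      haveI h2 : HasLiftingProperty (E.ι X) q := hR _ (hE.ι_mem X)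
      have sqk : CommSq (coprod.desc (q ≫ sqs.lift) (𝟙 X)) (E.ι X) q
          (E.σ.app X ≫ q) := by
        constructor
        apply coprod.hom_ext
        · rw [← Category.assoc, coprod.inl_desc, Category.assoc, ssec, Category.comp_id,
            inl_ι_assoc, d0_σ_assoc]
        · rw [← Category.assoc, coprod.inr_desc, inr_ι_assoc, d1_σ_assoc]
          simp
      have K0 : E.d0.app X ≫ sqk.lift = q ≫ sqs.lift := by
        rw [show E.d0.app X = coprod.inl ≫ E.ι X from (inl_ι E X).symm, Category.assoc,
          sqk.fac_left, coprod.inl_desc]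
      have K1 : E.d1.app X ≫ sqk.lift = 𝟙 X := by
        rw [show E.d1.app X = coprod.inr ≫ E.ι X from (inr_ι E X).symm, Category.assoc,
          sqk.fac_left, coprod.inr_desc]
      intro A u W r hr
      constructor
      · intro x y hxy
        obtain ⟨g, rfl⟩ := Quot.exists_rep x
        obtain ⟨g', rfl⟩ := Quot.exists_rep y
        have hxy' : Quot.mk (E.OverHomotopy (q ≫ u) r)
            ⟨q ≫ g.1, by rw [Category.assoc, g.2]⟩ =
            Quot.mk _ ⟨q ≫ g'.1, by rw [Category.assoc, g'.2]⟩ := hxy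
        obtain ⟨h, h0, h1, hh⟩ := (quot_mk_eq_iff hE hAn hr).1 hxy'
        have h0' : E.d0.app X ≫ h = q ≫ g.1 := h0
        have h1' : E.d1.app X ≫ h = q ≫ g'.1 := h1
        have hh' : h ≫ r = E.σ.app X ≫ q ≫ u := hh
        apply Quot.sound
        refine ⟨E.I.map sqs.lift ≫ h, ?_, ?_, ?_⟩
        · rw [← d0_nat_assoc, h0', ← Category.assoc, ssec, Category.id_comp]
        · rw [← d1_nat_assoc, h1', ← Category.assoc, ssec, Category.id_comp]
        · rw [Category.assoc, hh', sigma_nat_assoc,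
            show sqs.lift ≫ q ≫ u = u by
              rw [← Category.assoc, ssec, Category.id_comp]]
      · intro x
        obtain ⟨a, rfl⟩ := Quot.exists_rep x
        refine ⟨Quot.mk _ ⟨sqs.lift ≫ a.1, ?_⟩, ?_⟩
        · rw [Category.assoc, a.2, ← Category.assoc, ssec, Category.id_comp]
        · apply Quot.sound
          refine ⟨sqk.lift ≫ a.1, ?_, ?_, ?_⟩
          · rw [← Category.assoc, K0, Category.assoc]
          · rw [← Category.assoc, K1]; simp
          · rw [Category.assoc, a.2, ← Category.assoc, sqk.fac_right, Category.assoc]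

end Paper
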